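/- Fix N ≥ 1, M ≥ 1, K ≥ 0, L ≥ 1. On a probability space, let θ_{ℓ,n} (ℓ = 1, …, L, n = 1, …, N) be mutually independent real-valued random variables, each uniformly distributed on [−π/2, π/2]; define random vectors ṽ_ℓ ∈ ℂ^{N+1} by (ṽ_ℓ)_n = exp(−iθ_{ℓ,n}) for n ≤ N and (ṽ_ℓ)_{N+1} = 1. Let G ∈ ℂ^{(N+1)×M}, v_ℓ ∈ ℂ^{N+1}, τ_ℓ ∈ ℝ, a_{k,ℓ} ∈ ℝ, w_{k,ℓ} ∈ ℂ^M, and W_{E,ℓ} ∈ ℂ^{M×M} be deterministic, with each W_{E,ℓ} Hermitian. Then E[ Σ_ℓ τ_ℓ ( Σ_k a_{k,ℓ} |(v_ℓ ⊙ ṽ_ℓ)^H G w_{k,ℓ}|² + tr( G^H (v_ℓ ⊙ ṽ_ℓ)(v_ℓ ⊙ ṽ_ℓ)^H G W_{E,ℓ} ) ) ] = Σ_ℓ τ_ℓ ( Σ_k a_{k,ℓ} · w_{k,ℓ}^H Y_ℓ w_{k,ℓ} + tr( Y_ℓ W_{E,ℓ} ) ), where Y_ℓ = G^H diag(v_ℓ)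 Z diag(conj(v_ℓ)) G (an M×M Hermitian matrix, so w^H Y_ℓ w is a real number). -/

import Mathlib

open MeasureTheory Real ProbabilityTheory Matrix

section Aux

variable {P M : ℕ}

private lemma aux_key (G : Matrix (Fin P) (Fin M) ℂ) (w : Fin M → ℂ) (y : Fin P → ℂ) :
    star w ⬝ᵥ Gᴴ.mulVec y = star (G.mulVec w) ⬝ᵥ y := by
  rw [star_mulVec, dotProduct_mulVec]

private lemma aux_quad (A : Matrix (Fin P) (Fin P) ℂ) (x : Fin P → ℂ) :
    star x ⬝ᵥ A.mulVec x = ∑ m, ∑ n, A m n * (x n * (starRingEnd ℂ) (x m)) := by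
  simp only [dotProduct, mulVec, Pi.star_apply, RCLike.star_def, Finset.mul_sum]
  refine Finset.sum_congr rfl fun m _ => Finset.sum_congr rfl fun n _ => ?_
  ring

private lemma aux_L1 (G : Matrix (Fin P) (Fin M) ℂ) (A : Matrix (Fin P) (Fin P) ℂ)
    (w : Fin M → ℂ) :
    star w ⬝ᵥ (Gᴴ * A * G).mulVec w
      = ∑ m, ∑ n, A m n * ((G.mulVec w) n * (starRingEnd ℂ) ((G.mulVec w) m)) := by
  have h1 : (Gᴴ * A * G).mulVec w = Gᴴ.mulVec (A.mulVec (G.mulVec w)) := by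
    rw [← mulVec_mulVec, ← mulVec_mulVec]
  rw [h1, aux_key, aux_quad]

private lemma aux_L2 (G : Matrix (Fin P) (Fin M) ℂ) (A : Matrix (Fin P) (Fin P) ℂ)
    (B : Matrix (Fin M) (Fin M) ℂ) :
    Matrix.trace (Gᴴ * A * G * B) = ∑ m, ∑ n, A m n * (G * B * Gᴴ) n m := by
  have h : Gᴴ * A * G * B = (Gᴴ * A) * (G * B) := Matrix.mul_assoc _ _ _
  rw [h, Matrix.trace_mul_comm, ← Matrix.mul_assoc, Matrix.trace]
  simp only [Matrix.diag, Matrix.mul_apply]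
  rw [Finset.sum_comm]
  exact Finset.sum_congr rfl fun m _ => Finset.sum_congr rfl fun n _ => mul_comm _ _

private lemma aux_L3 (G : Matrix (Fin P) (Fin M) ℂ) (u : Fin P → ℂ) (w : Fin M → ℂ) :
    ((‖star u ⬝ᵥ G.mulVec w‖ ^ 2 : ℝ) : ℂ)
      = star w ⬝ᵥ (Gᴴ * vecMulVec u (star u) * G).mulVec w := by
  have h1 : (Gᴴ * vecMulVec u (star u) * G).mulVec w
      = Gᴴ.mulVec ((vecMulVec u (star u)).mulVec (G.mulVec w)) := by
    rw [← mulVec_mulVec, ← mulVec_mulVec]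
  rw [h1, aux_key]
  set x := G.mulVec w with hx
  have h2 : (vecMulVec u (star u)).mulVec x = (star u ⬝ᵥ x) • u := by
    ext p
    simp only [vecMulVec_apply, mulVec, dotProduct, Pi.star_apply, RCLike.star_def,
      Pi.smul_apply, smul_eq_mul, Finset.sum_mul]
    exact Finset.sum_congr rfl fun n _ => by ring
  rw [h2, dotProduct_smul]
  have h3 : star x ⬝ᵥ u = (starRingEnd ℂ) (star u ⬝ᵥ x) := by
    rw [star_dotProduct]; simp
  rw [h3, smul_eq_mul, Complex.sq_norm]
  exact (Complex.mul_conj _).symm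

private lemma aux_swap {K : ℕ} (a : Fin K → ℂ) (R : Fin P → Fin P → ℂ)
    (g : Fin K → Fin P → Fin P → ℂ) (h : Fin P → Fin P → ℂ) (t : ℂ) :
    t * ((∑ k, a k * (∑ m, ∑ n, R m n * g k m n)) + ∑ m, ∑ n, R m n * h m n)
      = ∑ m, ∑ n, R m n * (t * ((∑ k, a k * g k m n) + h m n)) := by
  have h1 : ∑ k, a k * (∑ m, ∑ n, R m n * g k m n)
      = ∑ m, ∑ n, R m n * (∑ k, a k * g k m n) := by
    simp only [Finset.mul_sum]
    rw [Finset.sum_comm]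
    refine Finset.sum_congr rfl fun m _ => ?_
    rw [Finset.sum_comm]
    exact Finset.sum_congr rfl fun n _ => Finset.sum_congr rfl fun k _ => by ring
  rw [h1, ← Finset.sum_add_distrib, Finset.mul_sum]
  refine Finset.sum_congr rfl fun m _ => ?_
  rw [← Finset.sum_add_distrib, Finset.mul_sum]
  exact Finset.sum_congr rfl fun n _ => by ring

/-- the uniform-law integral of `exp (s x)` for `s = ± I`. -/
private lemma aux_lawInt (s : ℂ) (hs : s = Complex.I ∨ s = -Complex.I) :
    ∫ x : ℝ, Complex.exp (s * x)
        ∂(ENNReal.ofReal (1 / π) • volume.restrict (Set.Icc (-(π / 2)) (π / 2)))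
      = ((2 / π : ℝ) : ℂ) := by
  have hπ : (0:ℝ) < π := Real.pi_pos
  have hs0 : s ≠ 0 := by rcases hs with h | h <;> simp [h, Complex.I_ne_zero]
  rw [integral_smul_measure, ENNReal.toReal_ofReal (by positivity)]
  rw [integral_Icc_eq_integral_Ioc,
    ← intervalIntegral.integral_of_le (by linarith : -(π/2) ≤ π/2),
    integral_exp_mul_complex hs0]
  have e1 : Complex.exp (Complex.I * ((π/2 : ℝ) : ℂ)) = Complex.I := by
    rw [mul_comm, Complex.exp_mul_I]
    simp [← Complex.ofReal_cos, ← Complex.ofReal_sin]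
  have e2 : Complex.exp (-Complex.I * ((π/2 : ℝ) : ℂ)) = -Complex.I := by
    rw [neg_mul, Complex.exp_neg, mul_comm, Complex.exp_mul_I]
    simp [← Complex.ofReal_cos, ← Complex.ofReal_sin, Complex.inv_I]
  have e3 : ((-(π/2) : ℝ) : ℂ) = -((π/2 : ℝ) : ℂ) := by push_cast; ring
  rcases hs with h | h <;> subst h
  · rw [e3, mul_neg, e1, ← neg_mul, e2, Complex.real_smul,
      show (Complex.I - -Complex.I) / Complex.I = 2 from by
        rw [div_eq_iff Complex.I_ne_zero]; ring]
    push_cast; ring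
  · rw [e3, mul_neg, e2, neg_mul, neg_neg, e1, Complex.real_smul,
      show (-Complex.I - Complex.I) / -Complex.I = 2 from by
        rw [div_eq_iff (neg_ne_zero.mpr Complex.I_ne_zero)]; ring]
    push_cast; ring


private lemma aux_swap2 {K : ℕ} (t : ℂ) (a : Fin K → ℂ) (A : Matrix (Fin P) (Fin P) ℂ)
    (x : Fin K → Fin P → ℂ) (C : Matrix (Fin P) (Fin P) ℂ) :
    t * ((∑ k, a k * (∑ m, ∑ n, A m n * (x k n * (starRingEnd ℂ) (x k m))))
        + ∑ m, ∑ n, A m n * C n m)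
      = ∑ m, ∑ n, A m n * (t * ((∑ k, a k * (x k n * (starRingEnd ℂ) (x k m))) + C n m)) :=
  aux_swap a (fun m n => A m n) (fun k m n => x k n * (starRingEnd ℂ) (x k m))
    (fun m n => C n m) t

end Aux

/-- Theorem 1, equation (5): the expected harvested-energy expression.
For i.i.d. uniform phase errors `θ_{ℓ,n}` on `[-π/2, π/2]` and the corresponding
random vectors `ṽ_ℓ`, the expectation of
`Σ_ℓ τ_ℓ (Σ_k a_{k,ℓ} |(v_ℓ ⊙ ṽ_ℓ)ᴴ G w_{k,ℓ}|² + tr(Gᴴ (v_ℓ⊙ṽ_ℓ)(v_ℓ⊙ṽ_ℓ)ᴴ G W_{E,ℓ}))`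
equals `Σ_ℓ τ_ℓ (Σ_k a_{k,ℓ} w_{k,ℓ}ᴴ Y_ℓ w_{k,ℓ} + tr(Y_ℓ W_{E,ℓ}))`, where
`Y_ℓ = Gᴴ diag(v_ℓ) Z diag(conj v_ℓ) G`. -/
theorem expected_harvested_energy {Ω : Type*} [MeasurableSpace Ω]
    {μ : Measure Ω} [IsProbabilityMeasure μ]
    (N M K L : ℕ) (hN : 1 ≤ N) (hM : 1 ≤ M) (hL : 1 ≤ L)
    (θ : Fin L → Fin N → Ω → ℝ) (hθ : ∀ l n, Measurable (θ l n))
    (hindep : iIndepFun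
      (fun p : Fin L × Fin N => θ p.1 p.2) μ)
    (hlaw : ∀ l n, Measure.map (θ l n) μ
      = ENNReal.ofReal (1 / π) • volume.restrict (Set.Icc (-(π / 2)) (π / 2)))
    (vt : Fin L → Ω → Fin (N + 1) → ℂ)
    (hvt : ∀ l ω (n : Fin (N + 1)), vt l ω n
      = if h : (n : ℕ) < N then Complex.exp (-(Complex.I * (θ l ⟨n, h⟩ ω : ℂ))) else 1)
    (G : Matrix (Fin (N + 1)) (Fin M) ℂ)
    (v : Fin L → Fin (N + 1) → ℂ) (τ : Fin L → ℝ) (a : Fin K → Fin L → ℝ)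
    (w : Fin K → Fin L → Fin M → ℂ)
    (WE : Fin L → Matrix (Fin M) (Fin M) ℂ) (hWE : ∀ l, (WE l).IsHermitian)
    (Z : Matrix (Fin (N + 1)) (Fin (N + 1)) ℂ)
    (hZ : ∀ m n, Z m n = if m = n then 1
      else if (m : ℕ) < N ∧ (n : ℕ) < N then ((4 / π ^ 2 : ℝ) : ℂ) else ((2 / π : ℝ) : ℂ))
    (Y : Fin L → Matrix (Fin M) (Fin M) ℂ)
    (hY : ∀ l, Y l = Gᴴ * diagonal (v l) * Z * diagonal (star (v l)) * G) :
    (∫ ω, ∑ l, (τ l : ℂ) *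
        ((∑ k, (a k l : ℂ) * ((‖star (v l * vt l ω) ⬝ᵥ G.mulVec (w k l)‖ ^ 2 : ℝ) : ℂ))
          + Matrix.trace (Gᴴ * vecMulVec (v l * vt l ω) (star (v l * vt l ω)) * G * WE l)) ∂μ)
      = ∑ l, (τ l : ℂ) *
          ((∑ k, (a k l : ℂ) * (star (w k l) ⬝ᵥ (Y l).mulVec (w k l)))
            + Matrix.trace (Y l * WE l)) := by
  classical
  have hπ : (0:ℝ) < π := Real.pi_pos
  -- coefficient function
  set d : Fin L → Fin (N+1) → Fin (N+1) → ℂ := fun l m n =>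
    v l m * (starRingEnd ℂ) (v l n) * ((τ l : ℂ) *
      ((∑ k, (a k l : ℂ) * (G.mulVec (w k l) n * (starRingEnd ℂ) (G.mulVec (w k l) m)))
        + (G * WE l * Gᴴ) n m)) with hd
  -- measurability of the entries of vt
  have hmvt : ∀ l (m : Fin (N+1)), Measurable (fun ω => vt l ω m) := by
    intro l m
    have hfun : (fun ω => vt l ω m)
        = fun ω => if h : (m:ℕ) < N then Complex.exp (-(Complex.I * (θ l ⟨m, h⟩ ω : ℂ)))
          else 1 := funext fun ω => hvt l ω m
    rw [hfun]
    by_cases h : (m:ℕ) < N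
    · simp only [dif_pos h]
      exact Complex.measurable_exp.comp
        ((measurable_const.mul (Complex.measurable_ofReal.comp (hθ l ⟨m, h⟩))).neg)
    · simp only [dif_neg h]; exact measurable_const
  -- unit modulus of the entries of vt
  have hnorm : ∀ l ω (m : Fin (N+1)), ‖vt l ω m‖ = 1 := by
    intro l ω m
    rw [hvt]
    by_cases h : (m:ℕ) < N
    · simp only [dif_pos h]
      rw [Complex.norm_exp]
      simp
    · simp [dif_neg h]
  -- integrability of entry products
  have hInt : ∀ l (m n : Fin (N+1)),
      Integrable (fun ω => vt l ω m * (starRingEnd ℂ) (vt l ω n)) μ := by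
    intro l m n
    refine (integrable_const (1:ℝ)).mono'
      (((hmvt l m).mul (RCLike.continuous_conj.measurable.comp (hmvt l n))).aestronglyMeasurable)
      (Filter.Eventually.of_forall fun ω => ?_)
    rw [norm_mul]
    simp [hnorm]
  -- expectation of a single phase factor
  have hExp : ∀ l (j : Fin N) (s : ℂ), (s = Complex.I ∨ s = -Complex.I) →
      ∫ ω, Complex.exp (s * (θ l j ω : ℂ)) ∂μ = ((2/π : ℝ) : ℂ) := by
    intro l j s hs
    have hmeas : Measurable fun x : ℝ => Complex.exp (s * x) :=
      Complex.measurable_exp.comp (measurable_const.mul Complex.measurable_ofReal)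
    rw [← integral_map (hθ l j).aemeasurable hmeas.aestronglyMeasurable, hlaw]
    exact aux_lawInt s hs
  -- expectation of a product of two independent phase factors
  have hPair : ∀ l (i j : Fin N), i ≠ j → ∀ (s t : ℂ),
      (s = Complex.I ∨ s = -Complex.I) → (t = Complex.I ∨ t = -Complex.I) →
      ∫ ω, Complex.exp (s * (θ l i ω : ℂ)) * Complex.exp (t * (θ l j ω : ℂ)) ∂μ
        = ((2/π : ℝ) : ℂ) * ((2/π : ℝ) : ℂ) := by
    intro l i j hij s t hs ht
    have hind : IndepFun (θ l i) (θ l j) μ :=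
      hindep.indepFun (i := (l,i)) (j := (l,j)) (fun hc => hij (congrArg Prod.snd hc))
    rw [indepFun_iff_map_prod_eq_prod_map_map (hθ l i).aemeasurable
      (hθ l j).aemeasurable] at hind
    have hms : Measurable fun x : ℝ => Complex.exp (s * x) :=
      Complex.measurable_exp.comp (measurable_const.mul Complex.measurable_ofReal)
    have hmt : Measurable fun x : ℝ => Complex.exp (t * x) :=
      Complex.measurable_exp.comp (measurable_const.mul Complex.measurable_ofReal)
    have hpm : Measurable fun ω => (θ l i ω, θ l j ω) := (hθ l i).prodMk (hθ l j)
    have h1 : (∫ ω, Complex.exp (s * (θ l i ω : ℂ)) * Complex.exp (t * (θ l j ω : ℂ)) ∂μ)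
        = ∫ p : ℝ × ℝ, Complex.exp (s * p.1) * Complex.exp (t * p.2)
            ∂(μ.map fun ω => (θ l i ω, θ l j ω)) :=
      (integral_map hpm.aemeasurable
        (((hms.comp measurable_fst).mul (hmt.comp measurable_snd)).aestronglyMeasurable)).symm
    haveI : IsProbabilityMeasure (μ.map (θ l i)) :=
      Measure.isProbabilityMeasure_map (hθ l i).aemeasurable
    haveI : IsProbabilityMeasure (μ.map (θ l j)) :=
      Measure.isProbabilityMeasure_map (hθ l j).aemeasurable
    rw [h1, hind]
    rw [integral_prod_mul (μ := μ.map (θ l i)) (ν := μ.map (θ l j))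
      (f := fun x : ℝ => Complex.exp (s * x)) (g := fun x : ℝ => Complex.exp (t * x))]
    rw [hlaw, hlaw, aux_lawInt s hs, aux_lawInt t ht]
  -- the entrywise expectation identity
  have hE : ∀ l (m n : Fin (N+1)),
      ∫ ω, vt l ω m * (starRingEnd ℂ) (vt l ω n) ∂μ = Z m n := by
    intro l m n
    by_cases hmn : m = n
    · subst hmn
      have h1 : ∀ ω, vt l ω m * (starRingEnd ℂ) (vt l ω m) = 1 := fun ω => by
        rw [Complex.mul_conj, Complex.normSq_eq_norm_sq, hnorm]; norm_num
      simp only [h1]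
      rw [integral_const, probReal_univ, one_smul, hZ]
      simp
    · by_cases hm : (m:ℕ) < N <;> by_cases hn : (n:ℕ) < N
      · -- both phase entries, independent
        have hij : (⟨(m:ℕ), hm⟩ : Fin N) ≠ ⟨(n:ℕ), hn⟩ := by
          intro hc
          exact hmn (Fin.ext (by simpa using congrArg Fin.val hc))
        have h1 : ∀ ω, vt l ω m * (starRingEnd ℂ) (vt l ω n)
            = Complex.exp ((-Complex.I) * (θ l ⟨(m:ℕ), hm⟩ ω : ℂ))
              * Complex.exp (Complex.I * (θ l ⟨(n:ℕ), hn⟩ ω : ℂ)) := fun ω => by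
          rw [hvt, hvt]
          simp only [dif_pos hm, dif_pos hn]
          congr 1
          · congr 1; ring
          · rw [← Complex.exp_conj]
            congr 1
            simp [Complex.conj_ofReal]
        simp only [h1]
        rw [hPair l _ _ hij _ _ (Or.inr rfl) (Or.inl rfl), hZ]
        simp only [hmn, if_false, hm, hn, and_self, if_true]
        push_cast
        ring
      · -- m phase, n is the last entry
        have h1 : ∀ ω, vt l ω m * (starRingEnd ℂ) (vt l ω n)
            = Complex.exp ((-Complex.I) * (θ l ⟨(m:ℕ), hm⟩ ω : ℂ)) := fun ω => by
          rw [hvt, hvt]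
          simp only [dif_pos hm, dif_neg hn, _root_.map_one, mul_one]
          congr 1
          ring
        simp only [h1]
        rw [hExp l _ _ (Or.inr rfl), hZ]
        simp [hmn, hm, hn]
      · -- n phase, m is the last entry
        have h1 : ∀ ω, vt l ω m * (starRingEnd ℂ) (vt l ω n)
            = Complex.exp (Complex.I * (θ l ⟨(n:ℕ), hn⟩ ω : ℂ)) := fun ω => by
          rw [hvt, hvt]
          simp only [dif_neg hm, dif_pos hn, one_mul]
          rw [← Complex.exp_conj]
          congr 1
          simp [Complex.conj_ofReal]
        simp only [h1]
        rw [hExp l _ _ (Or.inl rfl), hZ]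
        simp [hmn, hm, hn]
      · -- both last entries: contradiction with m ≠ n
        exact absurd (Fin.ext (by omega : (m:ℕ) = (n:ℕ))) hmn
  -- pointwise rewriting of the integrand
  have hpt : ∀ ω, (∑ l, (τ l : ℂ) *
        ((∑ k, (a k l : ℂ) * ((‖star (v l * vt l ω) ⬝ᵥ G.mulVec (w k l)‖ ^ 2 : ℝ) : ℂ))
          + Matrix.trace (Gᴴ * vecMulVec (v l * vt l ω) (star (v l * vt l ω)) * G * WE l)))
      = ∑ l, ∑ m, ∑ n, (vt l ω m * (starRingEnd ℂ) (vt l ω n)) * d l m n := by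
    intro ω
    refine Finset.sum_congr rfl fun l _ => ?_
    have e1 : ∀ k, ((‖star (v l * vt l ω) ⬝ᵥ G.mulVec (w k l)‖ ^ 2 : ℝ) : ℂ)
        = star (w k l) ⬝ᵥ (Gᴴ * vecMulVec (v l * vt l ω) (star (v l * vt l ω)) * G).mulVec
          (w k l) := fun k => aux_L3 G _ _
    simp only [e1, aux_L1, aux_L2]
    rw [aux_swap2 (τ l : ℂ) (fun k => (a k l : ℂ))
      (vecMulVec (v l * vt l ω) (star (v l * vt l ω)))
      (fun k => G.mulVec (w k l)) (G * WE l * Gᴴ)]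
    refine Finset.sum_congr rfl fun m _ => Finset.sum_congr rfl fun n _ => ?_
    simp only [hd, vecMulVec_apply, Pi.mul_apply, Pi.star_apply, RCLike.star_def, _root_.map_mul]
    ring
  -- rewriting of the right-hand side
  have hrhs : (∑ l, (τ l : ℂ) *
        ((∑ k, (a k l : ℂ) * (star (w k l) ⬝ᵥ (Y l).mulVec (w k l)))
          + Matrix.trace (Y l * WE l)))
      = ∑ l, ∑ m, ∑ n, Z m n * d l m n := by
    refine Finset.sum_congr rfl fun l _ => ?_
    have hY' : Y l = Gᴴ * (diagonal (v l) * Z * diagonal (star (v l))) * G := by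
      rw [hY l, Matrix.mul_assoc Gᴴ (diagonal (v l)) Z,
        Matrix.mul_assoc Gᴴ (diagonal (v l) * Z) (diagonal (star (v l)))]
    have hYWE : Y l * WE l = Gᴴ * (diagonal (v l) * Z * diagonal (star (v l))) * G * WE l := by
      rw [hY']
    rw [hYWE]
    simp only [hY', aux_L1, aux_L2]
    rw [aux_swap2 (τ l : ℂ) (fun k => (a k l : ℂ))
      (diagonal (v l) * Z * diagonal (star (v l)))
      (fun k => G.mulVec (w k l)) (G * WE l * Gᴴ)]
    refine Finset.sum_congr rfl fun m _ => Finset.sum_congr rfl fun n _ => ?_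
    simp only [hd, Matrix.mul_diagonal, Matrix.diagonal_mul, Pi.star_apply, RCLike.star_def]
    ring
  -- put everything together
  rw [integral_congr_ae (Filter.Eventually.of_forall hpt), hrhs]
  rw [integral_finset_sum _ (fun l _ => integrable_finset_sum _ (fun m _ =>
    integrable_finset_sum _ (fun n _ => (hInt l m n).mul_const (d l m n))))]
  refine Finset.sum_congr rfl fun l _ => ?_
  rw [integral_finset_sum _ (fun m _ =>
    integrable_finset_sum _ (fun n _ => (hInt l m n).mul_const (d l m n)))]
  refine Finset.sum_congr rfl fun m _ => ?_
  rw [integral_finset_sum _ (fun n _ => (hInt l m n).mul_const (d l m n))]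
  refine Finset.sum_congr rfl fun n _ => ?_
  rw [integral_mul_const, hE l m n]
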